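/- If Z is a bisimulation between two parity game arenas G and G' (i.e., Z respects colours, and satisfies the Zig and Zag conditions for moves), and (v, v') ∈ Z, then Eve has a winning strategy in the parity game (G, v) if and only if Eve has a winning strategy in the parity game (G', v'). -/

import Mathlib

/-- A parity game arena: positions partitioned between Eve (`eve`) and Adam,
a total move relation `E`, and a colouring `C`. -/
structure Arena (V : Type*) where
  eve : V → Prop
  E : V → V → Prop
  total : ∀ v, ∃ u, E v u
  C : V → ℕ

/-- An infinite play from `v0`. -/
def IsPlay {V : Type*} (G : Arena V) (v0 : V) (π : ℕ → V) : Prop :=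
  π 0 = v0 ∧ ∀ i, G.E (π i) (π (i + 1))

/-- A strategy (for Eve) maps finite plays ending in an Eve position to a successor. -/
def LegalStrat {V : Type*} (G : Arena V) (σ : List V → V) : Prop :=
  ∀ (ρ : List V) (v : V), G.eve v → G.E v (σ (ρ ++ [v]))

/-- The play `π` is consistent with Eve's strategy `σ`. -/
def Follows {V : Type*} (G : Arena V) (σ : List V → V) (π : ℕ → V) : Prop :=
  ∀ i, G.eve (π i) → π (i + 1) = σ (List.ofFn fun j : Fin (i + 1) => π j)

/-- Colour `c` occurs infinitely often along `π`. -/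
def InfOften {V : Type*} (G : Arena V) (π : ℕ → V) (c : ℕ) : Prop :=
  {i | G.C (π i) = c}.Infinite

/-- Eve wins a play if the least colour occurring infinitely often is even. -/
def EveWins {V : Type*} (G : Arena V) (π : ℕ → V) : Prop :=
  ∃ c, InfOften G π c ∧ Even c ∧ ∀ c', InfOften G π c' → c ≤ c'

/-- Eve has a winning strategy in the parity game `(G, v0)`. -/
def WinsFrom {V : Type*} (G : Arena V) (v0 : V) : Prop :=
  ∃ σ : List V → V, LegalStrat G σ ∧
    ∀ π : ℕ → V, IsPlay G v0 π → Follows G σ π → EveWins G π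

/-- A bisimulation between two parity game arenas. -/
structure IsBisim {V V' : Type*} (G : Arena V) (G' : Arena V') (Z : V → V' → Prop) : Prop where
  colour : ∀ v v', Z v v' → G.C v = G'.C v'
  player : ∀ v v', Z v v' → (G.eve v ↔ G'.eve v')
  zig : ∀ v v' u, Z v v' → G.E v u → ∃ u', G'.E v' u' ∧ Z u u'
  zag : ∀ v v' u', Z v v' → G'.E v' u' → ∃ u, G.E v u ∧ Z u u'


section Bisim

variable {V V' : Type*}

open Classical in
/-- Pick a witness of `P` if one exists, else a default. -/
noncomputable def pickV (d : V) (P : V → Prop) : V :=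
  if h : ∃ u, P u then h.choose else d

theorem pickV_spec (d : V) {P : V → Prop} (h : ∃ u, P u) : P (pickV d P) := by
  simp only [pickV, dif_pos h]
  exact h.choose_spec

open Classical in
/-- One step of the matching play construction. -/
noncomputable def stepM (G : Arena V) (Z : V → V' → Prop) (v : V) (σ : List V → V)
    (w : V) (rest : List V) (v'new : V') : V :=
  if G.eve w then σ ((w :: rest).reverse) else pickV v (fun u => G.E w u ∧ Z u v'new)

/-- The matching (reversed) history in `G` for a reversed history in `G'`. -/
noncomputable def gmatch (G : Arena V) (Z : V → V' → Prop) (v : V) (σ : List V → V) :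
    List V' → List V
  | [] => []
  | v0' :: t =>
    match gmatch G Z v σ t with
    | [] => [v]
    | w :: rest => stepM G Z v σ w rest v0' :: w :: rest

theorem gmatch_cons {G : Arena V} {Z : V → V' → Prop} {v : V} {σ : List V → V}
    {t : List V'} {w : V} {rest : List V} (v0' : V') (h : gmatch G Z v σ t = w :: rest) :
    gmatch G Z v σ (v0' :: t) = stepM G Z v σ w rest v0' :: w :: rest := by
  rw [gmatch, h]

theorem gmatch_cons_ne_nil {G : Arena V} {Z : V → V' → Prop} {v : V} {σ : List V → V}
    (t : List V') (v0' : V') : gmatch G Z v σ (v0' :: t) ≠ [] := by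
  rw [gmatch]
  rcases gmatch G Z v σ t with _ | ⟨a, b⟩ <;> simp

open Classical in
/-- The transferred strategy in `G'`. -/
noncomputable def tstrat (G : Arena V) (G' : Arena V') (Z : V → V' → Prop)
    (v : V) (v' : V') (σ : List V → V) (l' : List V') : V' :=
  if G.eve ((gmatch G Z v σ l'.reverse).headD v) ∧
      Z ((gmatch G Z v σ l'.reverse).headD v) (l'.reverse.headD v') then
    pickV v' (fun u' => G'.E (l'.reverse.headD v') u' ∧
      Z (σ (gmatch G Z v σ l'.reverse).reverse) u')
  else pickV v' (fun u' => G'.E (l'.reverse.headD v') u')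

open Classical in
theorem tstrat_eq {G : Arena V} {G' : Arena V'} {Z : V → V' → Prop}
    {v : V} {v' : V'} {σ : List V → V} {l' : List V'} {v'cur : V'} {t : List V'}
    {w : V} {rest : List V}
    (hr : l'.reverse = v'cur :: t) (hg : gmatch G Z v σ (v'cur :: t) = w :: rest) :
    tstrat G G' Z v v' σ l' =
      if G.eve w ∧ Z w v'cur then
        pickV v' (fun u' => G'.E v'cur u' ∧ Z (σ ((w :: rest).reverse)) u')
      else pickV v' (fun u' => G'.E v'cur u') := by
  unfold tstrat
  rw [hr, hg]
  simp only [List.headD_cons]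
  exact if_congr Iff.rfl rfl rfl

theorem revOfFn_succ {α : Type*} (n : ℕ) (f : ℕ → α) :
    (List.ofFn fun j : Fin (n + 1) => f j).reverse
      = f n :: (List.ofFn fun j : Fin n => f j).reverse := by
  rw [List.ofFn_succ']
  simp [List.reverse_concat]

theorem wins_mono {G : Arena V} {G' : Arena V'} {Z : V → V' → Prop}
    (hZ : IsBisim G G' Z) {v : V} {v' : V'} (hvv' : Z v v')
    (h : WinsFrom G v) : WinsFrom G' v' := by
  obtain ⟨σ, hleg, hwin⟩ := h
  refine ⟨tstrat G G' Z v v' σ, ?_, ?_⟩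
  · -- legality
    intro ρ0 w' hev
    have hr : (ρ0 ++ [w']).reverse = w' :: ρ0.reverse := by simp
    obtain ⟨w0, rest, hg⟩ : ∃ w0 rest, gmatch G Z v σ (w' :: ρ0.reverse) = w0 :: rest := by
      rcases hne : gmatch G Z v σ (w' :: ρ0.reverse) with _ | ⟨a, b⟩
      · exact absurd hne (gmatch_cons_ne_nil _ _)
      · exact ⟨a, b, rfl⟩
    rw [tstrat_eq hr hg]
    by_cases hc : G.eve w0 ∧ Z w0 w'
    · rw [if_pos hc]
      have he : G.E w0 (σ ((w0 :: rest).reverse)) := by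
        rw [List.reverse_cons]
        exact hleg rest.reverse w0 hc.1
      exact (pickV_spec v' (hZ.zig w0 w' _ hc.2 he)).1
    · rw [if_neg hc]
      exact pickV_spec v' (G'.total w')
  · -- winning
    intro π' hplay' hfol'
    set m : ℕ → V := fun i =>
      (gmatch G Z v σ ((List.ofFn fun j : Fin (i + 1) => π' j).reverse)).headD v with hm
    have h0 : gmatch G Z v σ ((List.ofFn fun j : Fin 1 => π' j).reverse) = [v] := by
      simp [gmatch]
    have hm0 : m 0 = v := by
      show (gmatch G Z v σ ((List.ofFn fun j : Fin (0 + 1) => π' j).reverse)).headD v = v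
      rw [h0]
      rfl
    have key : ∀ i,
        gmatch G Z v σ ((List.ofFn fun j : Fin (i + 1) => π' j).reverse)
          = (List.ofFn fun j : Fin (i + 1) => m j).reverse ∧ Z (m i) (π' i) := by
      intro i
      induction i with
      | zero =>
        refine ⟨?_, ?_⟩
        · rw [h0]
          have : (List.ofFn fun j : Fin 1 => m j) = [m 0] := by simp
          rw [this, hm0]
          rfl
        · rw [hm0, hplay'.1]
          exact hvv'
      | succ i ih =>
        obtain ⟨ihg, ihZ⟩ := ih
        have hrev : (List.ofFn fun j : Fin (i + 1 + 1) => π' j).reverse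
            = π' (i + 1) :: (List.ofFn fun j : Fin (i + 1) => π' j).reverse :=
          revOfFn_succ (i + 1) π'
        have hrevm : (List.ofFn fun j : Fin (i + 1) => m j).reverse
            = m i :: (List.ofFn fun j : Fin i => m j).reverse :=
          revOfFn_succ i m
        have ihg' : gmatch G Z v σ ((List.ofFn fun j : Fin (i + 1) => π' j).reverse)
            = m i :: (List.ofFn fun j : Fin i => m j).reverse := ihg.trans hrevm
        have hgnew : gmatch G Z v σ ((List.ofFn fun j : Fin (i + 1 + 1) => π' j).reverse)
            = stepM G Z v σ (m i) ((List.ofFn fun j : Fin i => m j).reverse) (π' (i + 1))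
                :: m i :: (List.ofFn fun j : Fin i => m j).reverse := by
          rw [hrev]
          exact gmatch_cons _ ihg'
        have hmsucc : m (i + 1)
            = stepM G Z v σ (m i) ((List.ofFn fun j : Fin i => m j).reverse) (π' (i + 1)) := by
          show (gmatch G Z v σ ((List.ofFn fun j : Fin (i + 1 + 1) => π' j).reverse)).headD v = _
          rw [hgnew]
          rfl
        have hrevrev : (m i :: (List.ofFn fun j : Fin i => m j).reverse).reverse
            = (List.ofFn fun j : Fin (i + 1) => m j) := by
          rw [← hrevm, List.reverse_reverse]
        refine ⟨?_, ?_⟩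
        · rw [hgnew, revOfFn_succ (i + 1) m, hrevm, hmsucc]
        · by_cases hev : G.eve (m i)
          · have hev' : G'.eve (π' i) := (hZ.player _ _ ihZ).1 hev
            have hfol := hfol' i hev'
            have hEσ : G.E (m i)
                (σ ((m i :: (List.ofFn fun j : Fin i => m j).reverse).reverse)) := by
              rw [List.reverse_cons]
              exact hleg _ (m i) hev
            have hex := hZ.zig (m i) (π' i) _ ihZ hEσ
            have hr' : (List.ofFn fun j : Fin (i + 1) => π' j).reverse
                = π' i :: (List.ofFn fun j : Fin i => π' j).reverse := revOfFn_succ i π'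
            have htst := tstrat_eq (G' := G') (v' := v') hr' (hr' ▸ ihg')
            rw [if_pos ⟨hev, ihZ⟩] at htst
            have hspec := pickV_spec v' hex
            rw [← htst, ← hfol] at hspec
            have hstep : m (i + 1)
                = σ ((m i :: (List.ofFn fun j : Fin i => m j).reverse).reverse) := by
              rw [hmsucc, stepM, if_pos hev]
            rw [hstep]
            exact hspec.2
          · have hEx := hZ.zag (m i) (π' i) (π' (i + 1)) ihZ (hplay'.2 i)
            have hstep : m (i + 1)
                = pickV v (fun u => G.E (m i) u ∧ Z u (π' (i + 1))) := by
              rw [hmsucc, stepM, if_neg hev]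
            rw [hstep]
            exact (pickV_spec v hEx).2
    have hZm : ∀ i, Z (m i) (π' i) := fun i => (key i).2
    have hedge : ∀ i, G.E (m i) (m (i + 1)) ∧
        (G.eve (m i) → m (i + 1) = σ (List.ofFn fun j : Fin (i + 1) => m j)) := by
      intro i
      obtain ⟨ihg, ihZ⟩ := key i
      have hrev : (List.ofFn fun j : Fin (i + 1 + 1) => π' j).reverse
          = π' (i + 1) :: (List.ofFn fun j : Fin (i + 1) => π' j).reverse :=
        revOfFn_succ (i + 1) π'
      have hrevm : (List.ofFn fun j : Fin (i + 1) => m j).reverse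
          = m i :: (List.ofFn fun j : Fin i => m j).reverse :=
        revOfFn_succ i m
      have ihg' : gmatch G Z v σ ((List.ofFn fun j : Fin (i + 1) => π' j).reverse)
          = m i :: (List.ofFn fun j : Fin i => m j).reverse := ihg.trans hrevm
      have hgnew : gmatch G Z v σ ((List.ofFn fun j : Fin (i + 1 + 1) => π' j).reverse)
          = stepM G Z v σ (m i) ((List.ofFn fun j : Fin i => m j).reverse) (π' (i + 1))
              :: m i :: (List.ofFn fun j : Fin i => m j).reverse := by
        rw [hrev]
        exact gmatch_cons _ ihg'
      have hmsucc : m (i + 1)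
          = stepM G Z v σ (m i) ((List.ofFn fun j : Fin i => m j).reverse) (π' (i + 1)) := by
        show (gmatch G Z v σ ((List.ofFn fun j : Fin (i + 1 + 1) => π' j).reverse)).headD v = _
        rw [hgnew]
        rfl
      have hrevrev : (m i :: (List.ofFn fun j : Fin i => m j).reverse).reverse
          = (List.ofFn fun j : Fin (i + 1) => m j) := by
        rw [← hrevm, List.reverse_reverse]
      by_cases hev : G.eve (m i)
      · have hmeq : m (i + 1)
            = σ ((m i :: (List.ofFn fun j : Fin i => m j).reverse).reverse) := by
          rw [hmsucc, stepM, if_pos hev]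
        refine ⟨?_, fun _ => ?_⟩
        · rw [hmeq, List.reverse_cons]
          exact hleg _ (m i) hev
        · rw [hmeq, hrevrev]
      · have hmeq : m (i + 1)
            = pickV v (fun u => G.E (m i) u ∧ Z u (π' (i + 1))) := by
          rw [hmsucc, stepM, if_neg hev]
        have hEx := hZ.zag (m i) (π' i) (π' (i + 1)) ihZ (hplay'.2 i)
        exact ⟨hmeq ▸ (pickV_spec v hEx).1, fun hc => absurd hc hev⟩
    have hwinm := hwin m ⟨hm0, fun i => (hedge i).1⟩ (fun i hev => (hedge i).2 hev)
    have hcol : ∀ i, G.C (m i) = G'.C (π' i) := fun i => hZ.colour _ _ (hZm i)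
    obtain ⟨c, hc1, hc2, hc3⟩ := hwinm
    have hsets : ∀ c0, InfOften G m c0 ↔ InfOften G' π' c0 := by
      intro c0
      unfold InfOften
      have : {i | G.C (m i) = c0} = {i | G'.C (π' i) = c0} := by
        ext i
        simp [hcol i]
      rw [this]
    exact ⟨c, (hsets c).1 hc1, hc2, fun c0 h0 => hc3 c0 ((hsets c0).2 h0)⟩

theorem IsBisim.flip {G : Arena V} {G' : Arena V'} {Z : V → V' → Prop}
    (hZ : IsBisim G G' Z) : IsBisim G' G (fun a b => Z b a) where
  colour := fun a b h => (hZ.colour b a h).symm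
  player := fun a b h => (hZ.player b a h).symm
  zig := fun a b u h he => hZ.zag b a u h he
  zag := fun a b u h he => hZ.zig b a u h he

end Bisim

/-- If `Z` is a bisimulation between `G` and `G'` and `(v, v') ∈ Z`, then Eve has a
winning strategy in `(G, v)` iff she has one in `(G', v')`. -/
theorem bisim_preserves_winning {V V' : Type*} (G : Arena V) (G' : Arena V')
    (Z : V → V' → Prop) (hZ : IsBisim G G' Z) (v : V) (v' : V') (hvv' : Z v v') :
    WinsFrom G v ↔ WinsFrom G' v' :=
  ⟨wins_mono hZ hvv', wins_mono hZ.flip hvv'⟩
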